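/- Let Φ be a left permutive cellular automaton with no memory on A^ℤ. Then Φ^n has positive anticipation for every n ≥ 1 if and only if Φ^m is not the identity map for every m ≥ 1. In particular, if Φ is not one-to-one, then Φ^n has positive anticipation for every n ≥ 1. -/
import Mathlib


/-- Left permutive local rule. -/
def LeftPermutive {A : Type*} {r : ℕ} (φ : (Fin (r + 1) → A) → A) : Prop :=
  ∀ t : Fin r → A, Function.Bijective fun a : A => φ (Fin.cons a t)

/-- `Φ` is the cellular automaton on `A^ℤ` with no memory and anticipation `r`
induced by the local rule `φ`. -/
def IsCA {A : Type*} {r : ℕ} (φ : (Fin (r + 1) → A) → A) (Φ : (ℤ → A) → ℤ → A) : Prop :=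
  ∀ x i, Φ x i = φ fun j : Fin (r + 1) => x (i + (j : ℕ))

/-- A memoryless map `F` on `A^ℤ` has zero anticipation if it is induced coordinatewise
by a single map of the alphabet; positive anticipation is the negation of this. -/
def ZeroAnticipation {A : Type*} (F : (ℤ → A) → ℤ → A) : Prop :=
  ∃ ψ : A → A, ∀ x i, F x i = ψ (x i)

/-- For a left permutive cellular automaton with no memory: `Φ^n` has positive
anticipation for every `n ≥ 1` iff `Φ^m` is not the identity map for every `m ≥ 1`.
In particular, if `Φ` is not one-to-one then `Φ^n` has positive anticipation for all
`n ≥ 1`. -/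
theorem posAnticipation_iff_no_power_identity {A : Type*} [Fintype A] {r : ℕ}
    (φ : (Fin (r + 1) → A) → A) (Φ : (ℤ → A) → ℤ → A)
    (hΦ : IsCA φ Φ) (hlp : LeftPermutive φ) :
    ((∀ n : ℕ, 1 ≤ n → ¬ ZeroAnticipation Φ^[n]) ↔ (∀ m : ℕ, 1 ≤ m → Φ^[m] ≠ id)) ∧
      (¬ Function.Injective Φ → ∀ n : ℕ, 1 ≤ n → ¬ ZeroAnticipation Φ^[n]) := by
  -- Key: for configurations agreeing on all coordinates ≥ 1, equality of the
  -- 0-th coordinate after n steps forces equality at coordinate 0.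
  have key : ∀ n : ℕ, ∀ x y : ℤ → A, (∀ j : ℤ, 1 ≤ j → x j = y j) →
      Φ^[n] x 0 = Φ^[n] y 0 → x 0 = y 0 := by
    intro n
    induction n with
    | zero => intro x y _ h; simpa using h
    | succ n ih =>
      intro x y hagree h
      have hstep : ∀ j : ℤ, 1 ≤ j → Φ x j = Φ y j := by
        intro j hj
        rw [hΦ, hΦ]
        congr 1
        funext k
        exact hagree _ (by omega)
      have h0 : Φ x 0 = Φ y 0 := by
        rw [Function.iterate_succ_apply, Function.iterate_succ_apply] at h
        exact ih (Φ x) (Φ y) hstep h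
      have hx : Φ x 0 = φ (Fin.cons (x 0) fun j : Fin r => x (1 + (j : ℕ))) := by
        rw [hΦ]
        congr 1
        funext k
        refine Fin.cases ?_ (fun j => ?_) k
        · simp
        · rw [Fin.cons_succ]
          congr 1
          simp [Fin.val_succ]
          ring
      have hy : Φ y 0 = φ (Fin.cons (y 0) fun j : Fin r => x (1 + (j : ℕ))) := by
        rw [hΦ]
        congr 1
        funext k
        refine Fin.cases ?_ (fun j => ?_) k
        · simp
        · rw [Fin.cons_succ]
          rw [hagree (1 + (j : ℕ)) (by omega)]
          congr 1
          simp [Fin.val_succ]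
          ring
      rw [hx, hy] at h0
      exact (hlp (fun j : Fin r => x (1 + (j : ℕ)))).injective h0
  -- Backward direction of the iff.
  have back : (∀ m : ℕ, 1 ≤ m → Φ^[m] ≠ id) →
      ∀ n : ℕ, 1 ≤ n → ¬ ZeroAnticipation Φ^[n] := by
    intro hm n hn
    rintro ⟨ψ, hψ⟩
    -- ψ is injective
    have hinj : Function.Injective ψ := by
      intro a b hab
      set x : ℤ → A := fun j => if j = 0 then a else a with hxdef
      set y : ℤ → A := fun j => if j = 0 then b else a with hydef
      have hagree : ∀ j : ℤ, 1 ≤ j → x j = y j := by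
        intro j hj
        simp [hxdef, hydef, show j ≠ 0 by omega]
      have h0 : Φ^[n] x 0 = Φ^[n] y 0 := by
        rw [hψ, hψ]
        simp [hxdef, hydef, hab]
      have := key n x y hagree h0
      simpa [hxdef, hydef] using this
    -- some positive iterate of ψ is the identity
    obtain ⟨i, j, hne, heq⟩ :=
      Finite.exists_ne_map_eq_of_infinite (fun k : ℕ => ψ^[k])
    have hcases : ∃ i j : ℕ, i < j ∧ ψ^[i] = ψ^[j] := by
      rcases lt_or_gt_of_ne hne with h | h
      · exact ⟨i, j, h, heq⟩
      · exact ⟨j, i, h, heq.symm⟩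
    obtain ⟨i, j, hij, heq⟩ := hcases
    have hk : ψ^[j - i] = id := by
      funext a
      have hji : j = i + (j - i) := by omega
      have : ψ^[i] (ψ^[j - i] a) = ψ^[i] a := by
        rw [← Function.iterate_add_apply, ← hji, ← heq]
      exact hinj.iterate i this
    -- Φ^[n * k] = id for k = j - i
    set k := j - i with hkdef
    have hk1 : 1 ≤ k := by omega
    have hiter : ∀ m : ℕ, ∀ x : ℤ → A, ∀ i : ℤ, Φ^[n * m] x i = ψ^[m] (x i) := by
      intro m
      induction m with
      | zero => intro x i; simp
      | succ m ihm =>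
        intro x i
        have : n * (m + 1) = n * m + n := by ring
        rw [this, Function.iterate_add_apply, ihm, hψ,
          Function.iterate_succ_apply]
    have hid : Φ^[n * k] = id := by
      funext x
      funext i
      rw [hiter, hk]
      rfl
    exact hm (n * k) (Nat.one_le_iff_ne_zero.mpr (by positivity)) hid
  constructor
  · constructor
    · intro h m hm hid
      exact h m hm ⟨id, fun x i => by rw [hid]; rfl⟩
    · exact back
  · intro hninj
    apply back
    intro m hm hid
    apply hninj
    intro x y hxy
    obtain ⟨m', rfl⟩ := Nat.exists_eq_add_of_le hm
    have : Φ^[1 + m'] x = Φ^[1 + m'] y := by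
      rw [Nat.add_comm, Function.iterate_succ_apply, Function.iterate_succ_apply, hxy]
    rwa [hid, id_eq, id_eq] at this
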